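/- Under the stated assumptions, ∫₀^T ∫_ℝ (−2θ_{t,x}+θ_{t,x}²)² π(t,x) dx dt = ∫₀^T ∫_ℝ (4θ_{t,x}² − 4θ_{t,x}³ + θ_{t,x}⁴) π(t,x) dx dt < ∞. -/
import Mathlib


open MeasureTheory Set

/-- The drift coefficient `μ^S_t = γ'_t + ∫ (e^x - 1 - x 1_{|x|≤1}) π(t,x) dx`. -/
noncomputable def muS (π : ℝ → ℝ → ℝ) (γ' : ℝ → ℝ) (t : ℝ) : ℝ :=
  γ' t + ∫ x : ℝ, (Real.exp x - 1 - (if |x| ≤ 1 then x else 0)) * π t x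

/-- `Σ_t = ∫ (e^x - 1)² π(t,x) dx`. -/
noncomputable def Sig (π : ℝ → ℝ → ℝ) (t : ℝ) : ℝ :=
  ∫ x : ℝ, (Real.exp x - 1) ^ 2 * π t x

/-- `θ_{t,x} = μ^S_t (e^x - 1) / Σ_t`. -/
noncomputable def theta (π : ℝ → ℝ → ℝ) (γ' : ℝ → ℝ) (t x : ℝ) : ℝ :=
  muS π γ' t * (Real.exp x - 1) / Sig π t

set_option maxHeartbeats 1000000 in
theorem Z_quadratic_variation_integrable
    (T : ℝ) (hT : 0 < T) (π : ℝ → ℝ → ℝ)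
    (hπmeas : Measurable (Function.uncurry π)) (hπnn : ∀ t x, 0 ≤ π t x)
    (h1 : ∫⁻ t in Set.Ioc 0 T, ∫⁻ x, ENNReal.ofReal (min 1 (x ^ 2) * π t x) < ⊤)
    (hA3 : ∫⁻ t in Set.Ioc 0 T, ∫⁻ x in {x : ℝ | 1 < |x|},
      ENNReal.ofReal (Real.exp (4 * x) * π t x) < ⊤)
    (γ' : ℝ → ℝ) (hγ' : IntegrableOn γ' (Set.Ioc 0 T))
    (hμint : ∀ t ∈ Set.Ioc 0 T,
      Integrable (fun x : ℝ => (Real.exp x - 1 - (if |x| ≤ 1 then x else 0)) * π t x))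
    (hSigInt : ∀ t ∈ Set.Ioc 0 T, Integrable (fun x : ℝ => (Real.exp x - 1) ^ 2 * π t x))
    (hSigPos : ∀ t ∈ Set.Ioc 0 T, 0 < Sig π t)
    (hA4 : ∀ t ∈ Set.Ioc 0 T, muS π γ' t ≤ 0 ∧ -Sig π t < muS π γ' t)
    :
    (∫⁻ t in Set.Ioc 0 T, ∫⁻ x,
        ENNReal.ofReal ((-2 * theta π γ' t x + (theta π γ' t x) ^ 2) ^ 2 * π t x) =
      ∫⁻ t in Set.Ioc 0 T, ∫⁻ x,
        ENNReal.ofReal ((4 * (theta π γ' t x) ^ 2 - 4 * (theta π γ' t x) ^ 3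
          + (theta π γ' t x) ^ 4) * π t x)) ∧
    (∫⁻ t in Set.Ioc 0 T, ∫⁻ x,
        ENNReal.ofReal ((4 * (theta π γ' t x) ^ 2 - 4 * (theta π γ' t x) ^ 3
          + (theta π γ' t x) ^ 4) * π t x) < ⊤) := by
  classical
  have hS : MeasurableSet {x : ℝ | 1 < |x|} :=
    measurableSet_lt measurable_const measurable_id.abs
  constructor
  · refine lintegral_congr fun t => lintegral_congr fun x => ?_
    congr 1
    ring
  · -- abbreviations
    set S : Set ℝ := {x : ℝ | 1 < |x|} with hSdef
    -- pointwise bound on theta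
    have hθ : ∀ t ∈ Set.Ioc 0 T, ∀ x : ℝ,
        |theta π γ' t x| ≤ |Real.exp x - 1| := by
      intro t ht x
      have hSg := hSigPos t ht
      obtain ⟨hμ0, hmu2⟩ := hA4 t ht
      have hμ : |muS π γ' t| ≤ Sig π t := by
        rw [abs_of_nonpos hμ0]; linarith
      rw [theta, abs_div, abs_mul, abs_of_pos hSg, div_le_iff₀ hSg]
      nlinarith [abs_nonneg (Real.exp x - 1), abs_nonneg (muS π γ' t)]
    -- pointwise bound on the integrand
    have hpt : ∀ t ∈ Set.Ioc 0 T, ∀ x : ℝ,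
        ENNReal.ofReal ((4 * (theta π γ' t x) ^ 2 - 4 * (theta π γ' t x) ^ 3
              + (theta π γ' t x) ^ 4) * π t x)
          ≤ 500 * ENNReal.ofReal (min 1 (x ^ 2) * π t x)
            + S.indicator (fun y => 500 * ENNReal.ofReal (Real.exp (4 * y) * π t y)) x := by
      intro t ht x
      have hθ' := hθ t ht x
      set θ := theta π γ' t x with hθdef
      have hπx := hπnn t x
      set v := |Real.exp x - 1| with hvdef
      have hv0 : 0 ≤ v := abs_nonneg _
      have ha0 : 0 ≤ |θ| := abs_nonneg _
      have h2 : θ ^ 2 = |θ| ^ 2 := (sq_abs θ).symm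
      have h4 : θ ^ 4 = |θ| ^ 4 := by
        rcases abs_cases θ with ⟨h, _⟩ | ⟨h, _⟩ <;> rw [h] <;> ring
      have h3 : -θ ^ 3 ≤ |θ| ^ 3 := by
        rcases abs_cases θ with ⟨h, h'⟩ | ⟨h, h'⟩ <;> rw [h] <;> nlinarith
      have hexpr : 4 * θ ^ 2 - 4 * θ ^ 3 + θ ^ 4 ≤ 4 * v ^ 2 + 4 * v ^ 3 + v ^ 4 := by
        have p2 := pow_le_pow_left₀ ha0 hθ' 2
        have p3 := pow_le_pow_left₀ ha0 hθ' 3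
        have p4 := pow_le_pow_left₀ ha0 hθ' 4
        linarith [h2, h3, h4, p2, p3, p4]
      by_cases hx : x ∈ S
      · -- big jumps
        have hx1 : 1 < |x| := hx
        have hmin : min 1 (x ^ 2) = 1 := by
          apply min_eq_left
          nlinarith [sq_abs x]
        have hexp : 0 < Real.exp x := Real.exp_pos x
        have he4 : Real.exp (4 * x) = (Real.exp x) ^ 4 := by
          rw [show (4:ℝ) * x = x + x + (x + x) by ring]
          simp only [Real.exp_add]
          ring
        have hv4 : v ^ 4 = (Real.exp x - 1) ^ 4 := by
          rw [hvdef]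
          rcases abs_cases (Real.exp x - 1) with ⟨h, _⟩ | ⟨h, _⟩ <;> rw [h] <;> ring
        have hb1 : 4 * v ^ 2 + 4 * v ^ 3 + v ^ 4 ≤ 9 + 9 * v ^ 4 := by
          nlinarith [sq_nonneg (v ^ 2 - 1), sq_nonneg (v - 1), sq_nonneg (v ^ 2 - v), hv0,
            sq_nonneg v, sq_nonneg (v^2 + v - 2)]
        have hb2 : v ^ 4 ≤ 8 * (Real.exp (4 * x) + 1) := by
          rw [hv4, he4]
          nlinarith [hexp.le, sq_nonneg (Real.exp x - 1), sq_nonneg ((Real.exp x)^2 - 1),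
            sq_nonneg (Real.exp x + 1), sq_nonneg ((Real.exp x)^2 - Real.exp x)]
        have hfin : (4 * θ ^ 2 - 4 * θ ^ 3 + θ ^ 4) * π t x
            ≤ 500 * (min 1 (x ^ 2) * π t x) + 500 * (Real.exp (4 * x) * π t x) := by
          rw [hmin]
          have hE : 0 < Real.exp (4 * x) := Real.exp_pos _
          have : 4 * θ ^ 2 - 4 * θ ^ 3 + θ ^ 4 ≤ 500 * 1 + 500 * Real.exp (4 * x) := by
            nlinarith [hexpr, hb1, hb2, hE]
          nlinarith [hπx, this, mul_le_mul_of_nonneg_right this hπx]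
        rw [Set.indicator_of_mem hx]
        calc ENNReal.ofReal ((4 * θ ^ 2 - 4 * θ ^ 3 + θ ^ 4) * π t x)
            ≤ ENNReal.ofReal (500 * (min 1 (x ^ 2) * π t x) + 500 * (Real.exp (4 * x) * π t x)) :=
              ENNReal.ofReal_le_ofReal hfin
          _ ≤ ENNReal.ofReal (500 * (min 1 (x ^ 2) * π t x))
              + ENNReal.ofReal (500 * (Real.exp (4 * x) * π t x)) := ENNReal.ofReal_add_le
          _ = 500 * ENNReal.ofReal (min 1 (x ^ 2) * π t x)
              + 500 * ENNReal.ofReal (Real.exp (4 * x) * π t x) := by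
              rw [ENNReal.ofReal_mul (by norm_num : (0:ℝ) ≤ 500),
                ENNReal.ofReal_mul (by norm_num : (0:ℝ) ≤ 500)]
              norm_num
      · -- small jumps
        have hx1 : |x| ≤ 1 := by
          simp only [hSdef, Set.mem_setOf_eq, not_lt] at hx; exact hx
        have hvx : v ≤ 2 * |x| := Real.abs_exp_sub_one_le hx1
        have hxa : 0 ≤ |x| := abs_nonneg x
        have hmin : min 1 (x ^ 2) = x ^ 2 := by
          apply min_eq_right
          nlinarith [sq_abs x]
        have hb : 4 * v ^ 2 + 4 * v ^ 3 + v ^ 4 ≤ 500 * x ^ 2 := by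
          have q2 := pow_le_pow_left₀ hv0 hvx 2
          have q3 := pow_le_pow_left₀ hv0 hvx 3
          have q4 := pow_le_pow_left₀ hv0 hvx 4
          have w3 : |x| ^ 3 ≤ x ^ 2 := by nlinarith [hxa, hx1, sq_abs x]
          have w4 : |x| ^ 4 ≤ x ^ 2 := by nlinarith [hxa, hx1, sq_abs x, sq_nonneg x]
          nlinarith [q2, q3, q4, w3, w4, sq_abs x, sq_nonneg x]
        have hfin : (4 * θ ^ 2 - 4 * θ ^ 3 + θ ^ 4) * π t x
            ≤ 500 * (min 1 (x ^ 2) * π t x) := by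
          rw [hmin]
          have := mul_le_mul_of_nonneg_right (le_trans hexpr hb) hπx
          linarith
        rw [Set.indicator_of_notMem hx, add_zero]
        calc ENNReal.ofReal ((4 * θ ^ 2 - 4 * θ ^ 3 + θ ^ 4) * π t x)
            ≤ ENNReal.ofReal (500 * (min 1 (x ^ 2) * π t x)) := ENNReal.ofReal_le_ofReal hfin
          _ = 500 * ENNReal.ofReal (min 1 (x ^ 2) * π t x) := by
              rw [ENNReal.ofReal_mul (by norm_num : (0:ℝ) ≤ 500)]; norm_num
    -- measurability facts
    have hg1 : Measurable (Function.uncurry fun t x : ℝ =>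
        ENNReal.ofReal (min 1 (x ^ 2) * π t x)) := by
      apply Measurable.ennreal_ofReal
      exact (measurable_const.min ((measurable_snd.pow measurable_const))).mul hπmeas
    have hSprod : MeasurableSet {q : ℝ × ℝ | 1 < |q.2|} := hS.preimage measurable_snd
    have hg2 : Measurable (Function.uncurry fun t x : ℝ =>
        Set.indicator S (fun y => ENNReal.ofReal (Real.exp (4 * y) * π t y)) x) := by
      have : (Function.uncurry fun t x : ℝ =>
          Set.indicator S (fun y => ENNReal.ofReal (Real.exp (4 * y) * π t y)) x)
          = Set.indicator {q : ℝ × ℝ | 1 < |q.2|}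
              (fun q => ENNReal.ofReal (Real.exp (4 * q.2) * π q.1 q.2)) := by
        funext p
        show Set.indicator S (fun y => ENNReal.ofReal (Real.exp (4 * y) * π p.1 y)) p.2 = _
        by_cases hp : 1 < |p.2|
        · rw [Set.indicator_of_mem (show p.2 ∈ S from hp),
            Set.indicator_of_mem (show p ∈ {q : ℝ × ℝ | 1 < |q.2|} from hp)]
        · rw [Set.indicator_of_notMem (show p.2 ∉ S from hp),
            Set.indicator_of_notMem (show p ∉ {q : ℝ × ℝ | 1 < |q.2|} from hp)]
      rw [this]
      exact Measurable.indicator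
        (((measurable_const.mul measurable_snd).exp.mul hπmeas).ennreal_ofReal) hSprod
    have hπt : ∀ t : ℝ, Measurable (π t) := fun t => hπmeas.comp measurable_prodMk_left
    -- inner bound
    have hinner : ∀ t ∈ Set.Ioc 0 T,
        (∫⁻ x, ENNReal.ofReal ((4 * (theta π γ' t x) ^ 2 - 4 * (theta π γ' t x) ^ 3
            + (theta π γ' t x) ^ 4) * π t x))
          ≤ 500 * (∫⁻ x, ENNReal.ofReal (min 1 (x ^ 2) * π t x))
            + 500 * ∫⁻ x in S, ENNReal.ofReal (Real.exp (4 * x) * π t x) := by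
      intro t ht
      have hm1 : Measurable fun x : ℝ => ENNReal.ofReal (min 1 (x ^ 2) * π t x) := by
        apply Measurable.ennreal_ofReal
        exact ((measurable_const.min (by fun_prop)).mul (hπt t))
      have hm2 : Measurable fun x : ℝ => ENNReal.ofReal (Real.exp (4 * x) * π t x) := by
        apply Measurable.ennreal_ofReal
        exact (Measurable.mul (by fun_prop) (hπt t))
      calc (∫⁻ x, ENNReal.ofReal ((4 * (theta π γ' t x) ^ 2 - 4 * (theta π γ' t x) ^ 3
            + (theta π γ' t x) ^ 4) * π t x))
          ≤ ∫⁻ x, (500 * ENNReal.ofReal (min 1 (x ^ 2) * π t x)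
              + S.indicator (fun y => 500 * ENNReal.ofReal (Real.exp (4 * y) * π t y)) x) :=
            lintegral_mono (hpt t ht)
        _ = (∫⁻ x, 500 * ENNReal.ofReal (min 1 (x ^ 2) * π t x))
            + ∫⁻ x, S.indicator (fun y => 500 * ENNReal.ofReal (Real.exp (4 * y) * π t y)) x := by
            exact lintegral_add_left (hm1.const_mul 500) _
        _ = 500 * (∫⁻ x, ENNReal.ofReal (min 1 (x ^ 2) * π t x))
            + 500 * ∫⁻ x in S, ENNReal.ofReal (Real.exp (4 * x) * π t x) := by
            rw [lintegral_const_mul 500 hm1, lintegral_indicator hS,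
              lintegral_const_mul 500 hm2]
    -- conclude
    calc (∫⁻ t in Set.Ioc 0 T, ∫⁻ x,
          ENNReal.ofReal ((4 * (theta π γ' t x) ^ 2 - 4 * (theta π γ' t x) ^ 3
            + (theta π γ' t x) ^ 4) * π t x))
        ≤ ∫⁻ t in Set.Ioc 0 T,
            (500 * (∫⁻ x, ENNReal.ofReal (min 1 (x ^ 2) * π t x))
              + 500 * ∫⁻ x in S, ENNReal.ofReal (Real.exp (4 * x) * π t x)) := by
          refine lintegral_mono_ae ?_
          filter_upwards [ae_restrict_mem measurableSet_Ioc] with t ht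
          exact hinner t ht
      _ = 500 * (∫⁻ t in Set.Ioc 0 T, ∫⁻ x, ENNReal.ofReal (min 1 (x ^ 2) * π t x))
          + 500 * ∫⁻ t in Set.Ioc 0 T, ∫⁻ x in S, ENNReal.ofReal (Real.exp (4 * x) * π t x) := by
          have hA : Measurable fun t => ∫⁻ x, ENNReal.ofReal (min 1 (x ^ 2) * π t x) :=
            Measurable.lintegral_prod_right hg1
          have hB : Measurable fun t => ∫⁻ x in S, ENNReal.ofReal (Real.exp (4 * x) * π t x) := by
            have hB0 : Measurable fun t : ℝ => ∫⁻ x,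
                S.indicator (fun y => ENNReal.ofReal (Real.exp (4 * y) * π t y)) x :=
              Measurable.lintegral_prod_right hg2
            simpa only [lintegral_indicator hS] using hB0
          rw [lintegral_add_left (hA.const_mul 500), lintegral_const_mul 500 hA,
            lintegral_const_mul 500 hB]
      _ < ⊤ := by
          apply ENNReal.add_lt_top.2
          constructor
          · exact ENNReal.mul_lt_top (by norm_num) h1
          · exact ENNReal.mul_lt_top (by norm_num) hA3
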